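/- For every n ≥ 1, the number of block-parallel update modes of [n] up to dynamical isomorphism on the limit set equals the sum over integer partitions i of n of [ n! / ∏_{j=1}^{d(i)} (m(i,j)!)^j ] · (1/lcm(i)), where lcm(i) is the least common multiple of the distinct part sizes of partition i. -/

import Mathlib

/-- A partitioned order of `[n]`: a set of pairwise disjoint nonempty lists
of distinct elements of `[n]` whose union is `[n]`. -/
structure PartitionedOrder (n : ℕ) where
  oblocks : Finset (List (Fin n))
  nonempty : ∀ S ∈ oblocks, S ≠ []
  nodup : ∀ S ∈ oblocks, S.Nodup
  disjoint : ∀ S ∈ oblocks, ∀ T ∈ oblocks, S ≠ T → ∀ x, x ∈ S → x ∉ T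
  cover : ∀ x : Fin n, ∃ S ∈ oblocks, x ∈ S

namespace PartitionedOrder

variable {n : ℕ}

/-- The block `W_ℓ = { S_k[ℓ mod n_k] : k }` of the sequential rewriting. -/
def phiBlock (μ : PartitionedOrder n) (ℓ : ℕ) : Finset (Fin n) :=
  μ.oblocks.attach.image (fun S =>
    S.1.get ⟨ℓ % S.1.length,
      Nat.mod_lt _ (List.length_pos_iff_ne_nil.mpr (μ.nonempty S.1 S.2))⟩)

/-- The period `p` of a partitioned order: the lcm of its o-block lengths. -/
def period (μ : PartitionedOrder n) : ℕ := μ.oblocks.lcm List.length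

/-- The sequential rewriting `φ(μ) = (W_0, …, W_{p-1})`. -/
def phi (μ : PartitionedOrder n) : List (Finset (Fin n)) :=
  (List.range μ.period).map μ.phiBlock

end PartitionedOrder

/-- An ordered partition of `[n]` (block-sequential update mode): a sequence of
nonempty pairwise disjoint subsets of `[n]` whose union is `[n]`. -/
def IsOrderedPartition {n : ℕ} (L : List (Finset (Fin n))) : Prop :=
  (∀ W ∈ L, W.Nonempty) ∧ L.Pairwise Disjoint ∧ ∀ x : Fin n, ∃ W ∈ L, x ∈ W

/-- `m(i,j)`: the multiplicity of the part of size `j` in the partition `i`. -/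
def Nat.Partition.mult {n : ℕ} (i : n.Partition) (j : ℕ) : ℕ :=
  Multiset.count j i.parts

/-- `d(i)`: the largest part of the partition `i` (0 for the empty partition). -/
def Nat.Partition.dmax {n : ℕ} (i : n.Partition) : ℕ :=
  i.parts.toFinset.sup id

/-- `lcm(i)`: the least common multiple of the distinct part sizes of `i`. -/
def Nat.Partition.lcmParts {n : ℕ} (i : n.Partition) : ℕ :=
  i.parts.toFinset.lcm id

namespace BPAux

variable {n : ℕ}

/-- the unique block containing `x`. -/
def blockOf (μ : PartitionedOrder n) (x : Fin n) : List (Fin n) :=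
  μ.oblocks.choose (x ∈ ·) (by
    obtain ⟨S, hS, hx⟩ := μ.cover x
    refine ⟨S, ⟨hS, hx⟩, ?_⟩
    rintro T ⟨hT, hxT⟩
    by_contra hne
    exact μ.disjoint T hT S hS hne x hxT hx)

lemma blockOf_mem (μ : PartitionedOrder n) (x : Fin n) : blockOf μ x ∈ μ.oblocks :=
  (Finset.choose_spec _ _ _).1

lemma mem_blockOf (μ : PartitionedOrder n) (x : Fin n) : x ∈ blockOf μ x :=
  (Finset.choose_spec _ _ _).2

lemma blockOf_eq (μ : PartitionedOrder n) {x : Fin n} {S : List (Fin n)}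
    (hS : S ∈ μ.oblocks) (hx : x ∈ S) : blockOf μ x = S := by
  by_contra hne
  exact μ.disjoint (blockOf μ x) (blockOf_mem μ x) S hS hne x (mem_blockOf μ x) hx

/-- block length of `x`. -/
def jfun (μ : PartitionedOrder n) (x : Fin n) : ℕ := (blockOf μ x).length

/-- position of `x` in its block. -/
def rfun (μ : PartitionedOrder n) (x : Fin n) : ℕ := (blockOf μ x).idxOf x

def cfun (μ : PartitionedOrder n) (x : Fin n) : ℕ × ℕ := (jfun μ x, rfun μ x)

lemma rfun_lt (μ : PartitionedOrder n) (x : Fin n) : rfun μ x < jfun μ x :=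
  List.idxOf_lt_length_iff.2 (mem_blockOf μ x)

lemma jfun_pos (μ : PartitionedOrder n) (x : Fin n) : 0 < jfun μ x :=
  Nat.pos_of_ne_zero (fun h => (μ.nonempty _ (blockOf_mem μ x)) (List.length_eq_zero_iff.1 h))

lemma mem_phiBlock_iff (μ : PartitionedOrder n) (ℓ : ℕ) (x : Fin n) :
    x ∈ μ.phiBlock ℓ ↔ ℓ % jfun μ x = rfun μ x := by
  unfold PartitionedOrder.phiBlock
  rw [Finset.mem_image]
  constructor
  · rintro ⟨⟨S, hS⟩, -, rfl⟩
    have hxS : S.get ⟨ℓ % S.length,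
        Nat.mod_lt _ (List.length_pos_iff.mpr (μ.nonempty S hS))⟩ ∈ S := List.get_mem _ _
    have hb : blockOf μ _ = S := blockOf_eq μ hS hxS
    simp only [jfun, rfun, hb]
    rw [List.get_idxOf (μ.nodup S hS)]
  · intro h
    refine ⟨⟨blockOf μ x, blockOf_mem μ x⟩, Finset.mem_attach _ _, ?_⟩
    have : ℓ % (blockOf μ x).length = List.idxOf x (blockOf μ x) := h
    simp only [this]
    exact List.idxOf_get (List.idxOf_lt_length_iff.2 (mem_blockOf μ x))

/-- the partition profile of a partitioned order. -/
def prof (μ : PartitionedOrder n) : n.Partition where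
  parts := μ.oblocks.val.map List.length
  parts_pos := by
    intro i hi
    rw [Multiset.mem_map] at hi
    obtain ⟨S, hS, rfl⟩ := hi
    exact List.length_pos_iff.mpr (μ.nonempty S hS)
  parts_sum := by
    have huniv : (Finset.univ : Finset (Fin n)) = μ.oblocks.biUnion (fun S => S.toFinset) := by
      ext x
      simp only [Finset.mem_univ, true_iff, Finset.mem_biUnion, List.mem_toFinset]
      exact μ.cover x
    have hdisj : ∀ S ∈ μ.oblocks, ∀ T ∈ μ.oblocks, S ≠ T →
        Disjoint S.toFinset T.toFinset := by
      intro S hS T hT hne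
      rw [Finset.disjoint_left]
      intro x hx
      rw [List.mem_toFinset] at *
      exact fun hxT => μ.disjoint S hS T hT hne x hx hxT
    have hcard := Finset.card_biUnion hdisj
    rw [← huniv, Finset.card_univ, Fintype.card_fin] at hcard
    have : ∑ S ∈ μ.oblocks, S.toFinset.card = ∑ S ∈ μ.oblocks, S.length :=
      Finset.sum_congr rfl (fun S hS => List.toFinset_card_of_nodup (μ.nodup S hS))
    rw [this] at hcard
    exact hcard.symm

lemma period_eq (μ : PartitionedOrder n) : μ.period = (prof μ).lcmParts := by
  unfold PartitionedOrder.period Nat.Partition.lcmParts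
  rw [Finset.lcm_def, Finset.lcm_def]
  simp only [prof, Multiset.toFinset_val, Multiset.map_id]
  rw [Multiset.lcm_dedup]

lemma jfun_dvd_period (μ : PartitionedOrder n) (x : Fin n) : jfun μ x ∣ μ.period :=
  Finset.dvd_lcm (blockOf_mem μ x)

lemma jfun_mem_parts (μ : PartitionedOrder n) (x : Fin n) : jfun μ x ∈ (prof μ).parts :=
  Multiset.mem_map.2 ⟨blockOf μ x, blockOf_mem μ x, rfl⟩

/-- validity of a labeling for a partition. -/
def Valid (i : n.Partition) (c : Fin n → ℕ × ℕ) : Prop :=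
  (∀ x, (c x).2 < (c x).1) ∧
  ∀ j r : ℕ, r < j →
    (Finset.univ.filter (fun x => c x = (j, r))).card = i.mult j

lemma mult_eq_card_blocks (μ : PartitionedOrder n) (j : ℕ) :
    (prof μ).mult j = (μ.oblocks.filter (fun S => S.length = j)).card := by
  unfold Nat.Partition.mult prof
  simp only [Multiset.count_map]
  show _ = Multiset.card (Multiset.filter _ μ.oblocks.val)
  congr 1
  exact Multiset.filter_congr (fun a _ => by rw [eq_comm])

lemma cfun_valid (μ : PartitionedOrder n) : Valid (prof μ) (cfun μ) := by
  constructor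
  · intro x; exact rfun_lt μ x
  · intro j r hr
    rw [mult_eq_card_blocks]
    refine Finset.card_bij (fun x _ => blockOf μ x) ?_ ?_ ?_
    · intro x hx
      rw [Finset.mem_filter] at hx ⊢
      refine ⟨blockOf_mem μ x, ?_⟩
      have := hx.2
      simp only [cfun, Prod.mk.injEq] at this
      exact this.1
    · intro x hx y hy hxy
      rw [Finset.mem_filter] at hx hy
      simp only [cfun, Prod.mk.injEq] at hx hy
      have hx2 := hx.2.2
      have hy2 := hy.2.2
      unfold rfun at hx2 hy2
      have hby : blockOf μ y = blockOf μ x := hxy.symm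
      rw [hby] at hy2
      have hmy : y ∈ blockOf μ x := hby ▸ mem_blockOf μ y
      have h1 : (blockOf μ x).get ⟨List.idxOf x (blockOf μ x),
          List.idxOf_lt_length_iff.2 (mem_blockOf μ x)⟩ = x := List.idxOf_get _
      have h2 : (blockOf μ x).get ⟨List.idxOf y (blockOf μ x),
          List.idxOf_lt_length_iff.2 hmy⟩ = y := List.idxOf_get _
      rw [← h1, ← h2]
      congr 2
      rw [hx2, hy2]
    · intro S hS
      rw [Finset.mem_filter] at hS
      have hrlt : r < S.length := hS.2 ▸ hr
      refine ⟨S.get ⟨r, hrlt⟩, ?_, blockOf_eq μ hS.1 (List.get_mem _ _)⟩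
      rw [Finset.mem_filter]
      refine ⟨Finset.mem_univ _, ?_⟩
      have hb : blockOf μ (S.get ⟨r, hrlt⟩) = S := blockOf_eq μ hS.1 (List.get_mem _ _)
      simp only [cfun, jfun, rfun, hb, Prod.mk.injEq]
      exact ⟨hS.2, by rw [List.get_idxOf (μ.nodup S hS.1)]⟩


-- ### modular arithmetic helpers

lemma modEq_mod_iff {j r : ℕ} (hr : r < j) (a : ℕ) : a % j = r ↔ a ≡ r [MOD j] := by
  unfold Nat.ModEq; rw [Nat.mod_eq_of_lt hr]

lemma add_neg_modEq {j p : ℕ} (hjp : j ∣ p) (hp : 0 < p) (m : ℕ) :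
    m + (p - m % p) ≡ 0 [MOD j] := by
  have h1 : m % p ≤ m := Nat.mod_le m p
  have h2 : m % p < p := Nat.mod_lt _ hp
  have h3 : m + (p - m % p) = (m - m % p) + p := by omega
  have h4 : m - m % p = p * (m / p) := by have := Nat.div_add_mod m p; omega
  rw [h3, Nat.modEq_zero_iff_dvd]
  exact dvd_add (h4 ▸ Dvd.dvd.mul_right hjp _) hjp

lemma shift_modEq_iff {j : ℕ} {m N : ℕ} (hN : m + N ≡ 0 [MOD j]) (a b : ℕ) :
    a + m ≡ b [MOD j] ↔ b + N ≡ a [MOD j] := by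
  constructor
  · intro h
    calc b + N ≡ (a + m) + N [MOD j] := h.symm.add_right N
      _ = a + (m + N) := by ring
      _ ≡ a + 0 [MOD j] := Nat.ModEq.add_left a hN
      _ = a := by ring
  · intro h
    calc a + m ≡ (b + N) + m [MOD j] := h.symm.add_right m
      _ = b + (m + N) := by ring
      _ ≡ b + 0 [MOD j] := Nat.ModEq.add_left b hN
      _ = b := by ring

-- ### counting residues

lemma card_residues {p j r : ℕ} (hj : j ∣ p) (hr : r < j) :
    ((Finset.range p).filter (fun ℓ => ℓ % j = r)).card = p / j := by
  have hj0 : 0 < j := lt_of_le_of_lt (Nat.zero_le r) hr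
  rw [← Finset.card_range (p / j)]
  symm
  refine Finset.card_bij (fun q _ => r + j * q) ?_ ?_ ?_
  · intro q hq
    rw [Finset.mem_range] at hq
    rw [Finset.mem_filter, Finset.mem_range]
    refine ⟨?_, by simp [Nat.add_mul_mod_self_left, Nat.mod_eq_of_lt hr]⟩
    show r + j * q < p
    have h5 : j * (q + 1) ≤ j * (p / j) := Nat.mul_le_mul_left _ hq
    rw [Nat.mul_div_cancel' hj] at h5
    have h6 : j * (q + 1) = j * q + j := by ring
    omega
  · intro a _ b _ h
    have h' : r + j * a = r + j * b := h
    exact Nat.eq_of_mul_eq_mul_left hj0 (by omega)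
  · intro ℓ hℓ
    rw [Finset.mem_filter, Finset.mem_range] at hℓ
    refine ⟨ℓ / j, Finset.mem_range.2 (Nat.div_lt_div_of_lt_of_dvd hj hℓ.1), ?_⟩
    show r + j * (ℓ / j) = ℓ
    have h7 := Nat.div_add_mod ℓ j
    have h8 := hℓ.2
    omega

lemma residue_unique {p j j' r r' : ℕ} (hp : 0 < p) (hj : j ∣ p) (hj' : j' ∣ p)
    (hr : r < j) (hr' : r' < j')
    (h : ∀ ℓ < p, (ℓ % j = r ↔ ℓ % j' = r')) : j = j' ∧ r = r' := by
  have hj0 : 0 < j := Nat.pos_of_ne_zero (by rintro rfl; omega)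
  have hj0' : 0 < j' := Nat.pos_of_ne_zero (by rintro rfl; omega)
  have hjle : j ≤ p := Nat.le_of_dvd hp hj
  have hjle' : j' ≤ p := Nat.le_of_dvd hp hj'
  -- r = r'
  have h1 : r % j' = r' := (h r (lt_of_lt_of_le hr hjle)).1 (Nat.mod_eq_of_lt hr)
  have h2 : r' % j = r := (h r' (lt_of_lt_of_le hr' hjle')).2 (Nat.mod_eq_of_lt hr')
  have hrr : r = r' := by
    have : r ≤ r' := h2 ▸ Nat.mod_le r' j
    have : r' ≤ r := h1 ▸ Nat.mod_le r j'
    omega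
  -- j = j'
  have hcard : ((Finset.range p).filter (fun ℓ => ℓ % j = r)).card =
      ((Finset.range p).filter (fun ℓ => ℓ % j' = r')).card := by
    congr 1
    apply Finset.filter_congr
    intro ℓ hℓ
    rw [Finset.mem_range] at hℓ
    exact h ℓ hℓ
  rw [card_residues hj hr, card_residues hj' hr'] at hcard
  refine ⟨?_, hrr⟩
  have e1 : p / (p / j) = j := Nat.div_div_self hj (by omega)
  have e2 : p / (p / j') = j' := Nat.div_div_self hj' (by omega)
  rw [← e1, ← e2, hcard]

-- ### labelings and rotation

variable {n : ℕ}

def Lbl (i : Nat.Partition n) : Type := {c : Fin n → ℕ × ℕ // Valid i c}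

def shiftc (m : ℕ) (c : Fin n → ℕ × ℕ) : Fin n → ℕ × ℕ :=
  fun x => ((c x).1, ((c x).2 + m) % (c x).1)

lemma valid_pos {i : n.Partition} {c : Fin n → ℕ × ℕ} (h : Valid i c) (x : Fin n) :
    0 < (c x).1 := lt_of_le_of_lt (Nat.zero_le _) (h.1 x)

lemma valid_mem_parts {i : n.Partition} {c : Fin n → ℕ × ℕ} (h : Valid i c) (x : Fin n) :
    (c x).1 ∈ i.parts := by
  have hx : x ∈ Finset.univ.filter (fun y => c y = ((c x).1, (c x).2)) := by
    simp
  have hc := h.2 (c x).1 (c x).2 (h.1 x)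
  rw [← Multiset.count_pos]
  show 0 < i.mult (c x).1
  rw [← hc]
  exact Finset.card_pos.2 ⟨x, hx⟩

lemma valid_dvd_lcm {i : n.Partition} {c : Fin n → ℕ × ℕ} (h : Valid i c) (x : Fin n) :
    (c x).1 ∣ i.lcmParts :=
  Finset.dvd_lcm (by simpa using Multiset.mem_toFinset.2 (valid_mem_parts h x))

lemma lcmParts_pos (i : n.Partition) : 0 < i.lcmParts := by
  apply Nat.pos_of_ne_zero
  intro h0
  unfold Nat.Partition.lcmParts at h0
  rw [Finset.lcm_eq_zero_iff] at h0
  simp only [Set.mem_image, Finset.mem_coe, Multiset.mem_toFinset, id] at h0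
  obtain ⟨j, hj, rfl⟩ := h0
  exact absurd (i.parts_pos hj) (by omega)

lemma shiftc_eq_iff {c : Fin n → ℕ × ℕ} (hv : ∀ x, (c x).2 < (c x).1)
    {m j r : ℕ} (hr : r < j) (x : Fin n) :
    shiftc m c x = (j, r) ↔ c x = (j, (r + (j - m % j)) % j) := by
  have hj0 : 0 < j := lt_of_le_of_lt (Nat.zero_le r) hr
  unfold shiftc
  rw [Prod.ext_iff, Prod.ext_iff]
  simp only
  constructor
  · rintro ⟨h1, h2⟩
    have hv2 : (c x).2 < j := h1 ▸ hv x
    refine ⟨h1, ?_⟩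
    rw [h1] at h2
    rw [modEq_mod_iff hr] at h2
    rw [eq_comm, modEq_mod_iff hv2]
    exact (shift_modEq_iff (add_neg_modEq dvd_rfl hj0 m) _ _).1 h2
  · rintro ⟨h1, h2⟩
    have hv2 : (c x).2 < j := h1 ▸ hv x
    refine ⟨h1, ?_⟩
    rw [h1]
    rw [eq_comm, modEq_mod_iff hv2] at h2
    rw [modEq_mod_iff hr]
    exact (shift_modEq_iff (add_neg_modEq dvd_rfl hj0 m) _ _).2 h2

lemma valid_shiftc {i : n.Partition} {c : Fin n → ℕ × ℕ} (h : Valid i c) (m : ℕ) :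
    Valid i (shiftc m c) := by
  constructor
  · intro x
    exact Nat.mod_lt _ (valid_pos h x)
  · intro j r hr
    have hj0 : 0 < j := lt_of_le_of_lt (Nat.zero_le r) hr
    have hs : (r + (j - m % j)) % j < j := Nat.mod_lt _ hj0
    rw [Finset.filter_congr (fun x _ => by rw [shiftc_eq_iff h.1 hr x])]
    exact h.2 j _ hs

lemma shiftc_shiftc (a b : ℕ) (c : Fin n → ℕ × ℕ) :
    shiftc a (shiftc b c) = shiftc (b + a) c := by
  funext x
  unfold shiftc
  simp only [Prod.mk.injEq, true_and]
  rw [Nat.mod_add_mod, Nat.add_assoc]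

lemma shiftc_id {i : n.Partition} {c : Fin n → ℕ × ℕ} (h : Valid i c) {M : ℕ}
    (hM : i.lcmParts ∣ M) : shiftc M c = c := by
  funext x
  unfold shiftc
  have hj := valid_dvd_lcm h x
  have : ((c x).2 + M) % (c x).1 = (c x).2 := by
    rw [modEq_mod_iff (h.1 x)]
    have : M ≡ 0 [MOD (c x).1] := (Nat.modEq_zero_iff_dvd).2 (hj.trans hM)
    calc (c x).2 + M ≡ (c x).2 + 0 [MOD (c x).1] := Nat.ModEq.add_left _ this
      _ = (c x).2 := by ring
  rw [this]

def rotSetoid (i : Nat.Partition n) : Setoid (Lbl i) where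
  r c c' := ∃ m : ℕ, c'.1 = shiftc m c.1
  iseqv := by
    constructor
    · intro c
      refine ⟨0, ?_⟩
      funext x
      unfold shiftc
      simp [Nat.mod_eq_of_lt (c.2.1 x)]
    · rintro c c' ⟨m, hm⟩
      set L := (Nat.Partition.lcmParts i) with hL
      have hL0 : 0 < L := lcmParts_pos i
      refine ⟨L - m % L, ?_⟩
      rw [hm, shiftc_shiftc]
      symm
      apply shiftc_id c.2
      have h1 : m % L ≤ m := Nat.mod_le m L
      have h2 : m % L < L := Nat.mod_lt _ hL0
      have h4 : m - m % L = L * (m / L) := by have := Nat.div_add_mod m L; omega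
      have : m + (L - m % L) = L * (m / L) + L := by omega
      rw [this]
      exact dvd_add (Dvd.intro _ rfl) dvd_rfl
    · rintro c c' c'' ⟨m, hm⟩ ⟨m', hm'⟩
      exact ⟨m + m', by rw [hm', hm, shiftc_shiftc]⟩

lemma valid_unique {i i' : n.Partition} {c : Fin n → ℕ × ℕ}
    (h : Valid i c) (h' : Valid i' c) : i = i' := by
  apply Nat.Partition.ext
  ext j
  rcases Nat.eq_zero_or_pos j with rfl | hj
  · rw [Multiset.count_eq_zero_of_notMem (fun hh => by exact absurd (i.parts_pos hh) (by omega)),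
      Multiset.count_eq_zero_of_notMem (fun hh => by exact absurd (i'.parts_pos hh) (by omega))]
  · have e1 := h.2 j 0 hj
    have e2 := h'.2 j 0 hj
    exact (e1.symm.trans e2 : i.mult j = i'.mult j)

-- ### phi and labelings

lemma phi_length (μ : PartitionedOrder n) : μ.phi.length = μ.period := by
  simp [PartitionedOrder.phi]

lemma period_pos (μ : PartitionedOrder n) : 0 < μ.period := by
  rw [period_eq]; exact lcmParts_pos _

lemma phi_get (μ : PartitionedOrder n) {ℓ : ℕ} (h : ℓ < μ.phi.length) :
    μ.phi.get ⟨ℓ, h⟩ = μ.phiBlock ℓ := by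
  simp [PartitionedOrder.phi]

lemma rel_forward {μ μ' : PartitionedOrder n} {k : ℕ} (h : μ.phi = μ'.phi.rotate k) :
    prof μ = prof μ' ∧ cfun μ = shiftc (μ.period - k % μ.period) (cfun μ') := by
  have hp : μ.period = μ'.period := by
    have := congrArg List.length h
    rwa [phi_length, List.length_rotate, phi_length] at this
  have hp0 : 0 < μ.period := period_pos μ
  set p := μ.period with hpdef
  have hblock : ∀ ℓ, ℓ < p → μ.phiBlock ℓ = μ'.phiBlock ((ℓ + k) % p) := by
    intro ℓ hℓ
    have h1 : ℓ < μ.phi.length := by rw [phi_length]; exact hℓ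
    have h2 : ℓ < (μ'.phi.rotate k).length := by rw [← h]; exact h1
    calc μ.phiBlock ℓ = μ.phi.get ⟨ℓ, h1⟩ := (phi_get μ h1).symm
      _ = (μ'.phi.rotate k).get ⟨ℓ, h2⟩ := by
          exact List.get_of_eq h _
      _ = μ'.phi.get ⟨(ℓ + k) % μ'.phi.length, _⟩ := List.get_rotate μ'.phi k ⟨ℓ, h2⟩
      _ = μ'.phiBlock ((ℓ + k) % p) := by
          rw [phi_get μ']
          congr 1
          rw [phi_length, ← hp]
  have hc : cfun μ = shiftc (p - k % p) (cfun μ') := by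
    funext x
    have hj : jfun μ x ∣ p := jfun_dvd_period μ x
    have hj' : jfun μ' x ∣ p := hp ▸ jfun_dvd_period μ' x
    have hj0' : 0 < jfun μ' x := jfun_pos μ' x
    have hN : k + (p - k % p) ≡ 0 [MOD jfun μ' x] := add_neg_modEq hj' hp0 k
    have hmem : ∀ ℓ < p, (ℓ % jfun μ x = rfun μ x ↔
        ℓ % jfun μ' x = (rfun μ' x + (p - k % p)) % jfun μ' x) := by
      intro ℓ hℓ
      rw [← mem_phiBlock_iff μ ℓ x, hblock ℓ hℓ, mem_phiBlock_iff,
        Nat.mod_mod_of_dvd _ hj', modEq_mod_iff (rfun_lt μ' x),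
        modEq_mod_iff (Nat.mod_lt _ hj0')]
      constructor
      · intro hh
        have h3 : rfun μ' x + (p - k % p) ≡ ℓ [MOD jfun μ' x] :=
          (shift_modEq_iff hN ℓ (rfun μ' x)).1 hh
        exact ((Nat.mod_modEq _ _).trans h3).symm
      · intro hh
        exact (shift_modEq_iff hN ℓ (rfun μ' x)).2
          (hh.trans (Nat.mod_modEq _ _)).symm
    obtain ⟨hjj, hrr⟩ := residue_unique hp0 hj hj' (rfun_lt μ x)
      (Nat.mod_lt _ hj0') hmem
    show (jfun μ x, rfun μ x) = ((jfun μ' x), (rfun μ' x + (p - k % p)) % jfun μ' x)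
    exact Prod.ext hjj hrr
  refine ⟨valid_unique (cfun_valid μ) ?_, hc⟩
  rw [hc]
  exact valid_shiftc (cfun_valid μ') _

lemma rel_backward {μ μ' : PartitionedOrder n} (h1 : prof μ = prof μ') {m : ℕ}
    (h2 : cfun μ = shiftc m (cfun μ')) : ∃ k, μ.phi = μ'.phi.rotate k := by
  have hp : μ.period = μ'.period := by rw [period_eq, period_eq, h1]
  have hp0 : 0 < μ.period := period_pos μ
  set p := μ.period with hpdef
  set k := p - m % p with hkdef
  refine ⟨k, ?_⟩
  apply List.ext_get
  · rw [phi_length, List.length_rotate, phi_length]; exact hp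
  intro ℓ h₁ h₂
  have hℓ : ℓ < p := by rw [phi_length] at h₁; exact h₁
  rw [phi_get μ h₁, List.get_rotate, phi_get μ']
  have hlen : μ'.phi.length = p := by rw [phi_length, ← hp]
  rw [hlen]
  ext x
  have hj' : jfun μ' x ∣ p := hp ▸ jfun_dvd_period μ' x
  have hj0' : 0 < jfun μ' x := jfun_pos μ' x
  rw [mem_phiBlock_iff, mem_phiBlock_iff, Nat.mod_mod_of_dvd _ hj']
  have hcx := congrFun h2 x
  have hjeq : jfun μ x = jfun μ' x := congrArg Prod.fst hcx
  have hreq : rfun μ x = (rfun μ' x + m) % jfun μ' x := congrArg Prod.snd hcx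
  rw [hjeq, hreq]
  have hclaim : p - k % p ≡ m [MOD jfun μ' x] := by
    rcases Nat.eq_zero_or_pos (m % p) with hz | hpos
    · have hpm : p ∣ m := Nat.dvd_of_mod_eq_zero hz
      have hk : k = p := by omega
      have : p - k % p = p := by rw [hk, Nat.mod_self]; omega
      rw [this]
      exact ((Nat.modEq_zero_iff_dvd).2 hj').trans
        ((Nat.modEq_zero_iff_dvd).2 (hj'.trans hpm)).symm
    · have hmp : m % p < p := Nat.mod_lt _ hp0
      have hklt : k < p := by omega
      have : p - k % p = m % p := by rw [Nat.mod_eq_of_lt hklt]; omega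
      rw [this]
      exact Nat.ModEq.of_dvd hj' (Nat.mod_modEq m p)
  have hN : k + (p - k % p) ≡ 0 [MOD jfun μ' x] := add_neg_modEq hj' hp0 k
  rw [modEq_mod_iff (Nat.mod_lt _ hj0'), modEq_mod_iff (rfun_lt μ' x)]
  have hNN : rfun μ' x + (p - k % p) ≡ rfun μ' x + m [MOD jfun μ' x] :=
    Nat.ModEq.add_left _ hclaim
  constructor
  · intro hh
    -- hh : ℓ ≡ (r' + m) % j'  →  goal : ℓ + k ≡ r'
    apply (shift_modEq_iff hN ℓ (rfun μ' x)).2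
    exact hNN.trans ((hh.trans (Nat.mod_modEq _ _)).symm)
  · intro hh
    have h3 : rfun μ' x + (p - k % p) ≡ ℓ [MOD jfun μ' x] :=
      (shift_modEq_iff hN ℓ (rfun μ' x)).1 hh
    exact ((Nat.mod_modEq _ _).trans (hNN.symm.trans h3)).symm

-- ### construction of a partitioned order from a valid labeling

section Construct

variable {i : n.Partition} {c : Fin n → ℕ × ℕ}

/-- fiber of the labeling. -/
def Fib (c : Fin n → ℕ × ℕ) (j r : ℕ) : Finset (Fin n) :=
  Finset.univ.filter (fun x => c x = (j, r))

noncomputable def elem (hc : Valid i c) (j : ℕ) {r : ℕ} (hr : r < j)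
    (t : Fin (i.mult j)) : Fin n :=
  ((Fib c j r).orderIsoOfFin (hc.2 j r hr) t : Fin n)

lemma c_elem (hc : Valid i c) (j : ℕ) {r : ℕ} (hr : r < j) (t : Fin (i.mult j)) :
    c (elem hc j hr t) = (j, r) := by
  have := ((Fib c j r).orderIsoOfFin (hc.2 j r hr) t).2
  simp only [Fib, Finset.mem_filter] at this
  exact this.2

lemma elem_injective (hc : Valid i c) (j : ℕ) {r : ℕ} (hr : r < j) :
    Function.Injective (elem hc j hr) := fun a b h =>
  ((Fib c j r).orderIsoOfFin (hc.2 j r hr)).injective (Subtype.ext h)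

noncomputable def Blk (hc : Valid i c) (j : ℕ) (t : Fin (i.mult j)) : List (Fin n) :=
  List.ofFn (fun r : Fin j => elem hc j r.isLt t)

lemma Blk_length (hc : Valid i c) (j : ℕ) (t : Fin (i.mult j)) :
    (Blk hc j t).length = j := List.length_ofFn

lemma mem_Blk (hc : Valid i c) (j : ℕ) (t : Fin (i.mult j)) {x : Fin n} :
    x ∈ Blk hc j t ↔ ∃ r : Fin j, elem hc j r.isLt t = x := by
  rw [Blk, List.mem_ofFn]

lemma Blk_nodup (hc : Valid i c) (j : ℕ) (t : Fin (i.mult j)) : (Blk hc j t).Nodup := by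
  rw [Blk, List.nodup_ofFn]
  intro a b h
  have := congrArg c h
  rw [c_elem hc j a.isLt, c_elem hc j b.isLt] at this
  exact Fin.ext (by exact congrArg Prod.snd this)

noncomputable def build (hc : Valid i c) : PartitionedOrder n where
  oblocks := i.parts.toFinset.biUnion
    (fun j => Finset.univ.image (fun t : Fin (i.mult j) => Blk hc j t))
  nonempty := by
    intro S hS
    rw [Finset.mem_biUnion] at hS
    obtain ⟨j, hj, hS⟩ := hS
    rw [Finset.mem_image] at hS
    obtain ⟨t, -, rfl⟩ := hS
    have : 0 < j := i.parts_pos (Multiset.mem_toFinset.1 hj)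
    intro hnil
    have := Blk_length hc j t
    rw [hnil] at this
    simp at this
    omega
  nodup := by
    intro S hS
    rw [Finset.mem_biUnion] at hS
    obtain ⟨j, hj, hS⟩ := hS
    rw [Finset.mem_image] at hS
    obtain ⟨t, -, rfl⟩ := hS
    exact Blk_nodup hc j t
  disjoint := by
    intro S hS T hT hne x hxS hxT
    rw [Finset.mem_biUnion] at hS hT
    obtain ⟨j, hj, hS⟩ := hS
    obtain ⟨j', hj', hT⟩ := hT
    rw [Finset.mem_image] at hS hT
    obtain ⟨t, -, rfl⟩ := hS
    obtain ⟨t', -, rfl⟩ := hT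
    obtain ⟨r, hr⟩ := (mem_Blk hc j t).1 hxS
    obtain ⟨r', hr'⟩ := (mem_Blk hc j' t').1 hxT
    have h1 : c x = (j, (r : ℕ)) := hr ▸ c_elem hc j r.isLt t
    have h2 : c x = (j', (r' : ℕ)) := hr' ▸ c_elem hc j' r'.isLt t'
    have hjj : j = j' := by rw [h1] at h2; exact (congrArg Prod.fst h2)
    subst hjj
    have hrr : (r : ℕ) = (r' : ℕ) := by rw [h1] at h2; exact congrArg Prod.snd h2
    have hfin : r = r' := Fin.ext hrr
    subst hfin
    have ht : t = t' := elem_injective hc j r.isLt (hr.trans hr'.symm)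
    exact hne (by rw [ht])
  cover := by
    intro x
    have hvx := hc.1 x
    set j := (c x).1
    set r := (c x).2
    have hj : j ∈ i.parts.toFinset := Multiset.mem_toFinset.2 (valid_mem_parts hc x)
    have hx : x ∈ Fib c j r := by simp [Fib]; rfl
    set t := ((Fib c j r).orderIsoOfFin (hc.2 j r hvx)).symm ⟨x, hx⟩
    refine ⟨Blk hc j t, ?_, ?_⟩
    · rw [Finset.mem_biUnion]
      exact ⟨j, hj, Finset.mem_image.2 ⟨t, Finset.mem_univ _, rfl⟩⟩
    · rw [mem_Blk]
      refine ⟨⟨r, hvx⟩, ?_⟩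
      show ((Fib c j r).orderIsoOfFin (hc.2 j r hvx) t : Fin n) = x
      simp [t]

lemma build_oblocks (hc : Valid i c) : (build hc).oblocks = i.parts.toFinset.biUnion
    (fun j => Finset.univ.image (fun t : Fin (i.mult j) => Blk hc j t)) := rfl

lemma cfun_build (hc : Valid i c) : cfun (build hc) = c := by
  funext x
  have hvx := hc.1 x
  have hx : x ∈ Fib c (c x).1 (c x).2 := by simp [Fib]
  set t := ((Fib c (c x).1 (c x).2).orderIsoOfFin (hc.2 (c x).1 (c x).2 hvx)).symm ⟨x, hx⟩ with ht
  have hxB : x ∈ Blk hc (c x).1 t := by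
    rw [mem_Blk]
    refine ⟨⟨(c x).2, hvx⟩, ?_⟩
    show ((Fib c (c x).1 (c x).2).orderIsoOfFin (hc.2 (c x).1 (c x).2 hvx) t : Fin n) = x
    simp [ht]
  have hB : Blk hc (c x).1 t ∈ (build hc).oblocks := by
    rw [build_oblocks, Finset.mem_biUnion]
    exact ⟨(c x).1, Multiset.mem_toFinset.2 (valid_mem_parts hc x),
      Finset.mem_image.2 ⟨t, Finset.mem_univ _, rfl⟩⟩
  have hbl : blockOf (build hc) x = Blk hc (c x).1 t := blockOf_eq _ hB hxB
  show (jfun _ x, rfun _ x) = c x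
  have hj : jfun (build hc) x = (c x).1 := by rw [jfun, hbl, Blk_length]
  have hr : rfun (build hc) x = (c x).2 := by
    rw [rfun, hbl]
    have hlt : (c x).2 < (Blk hc (c x).1 t).length := by rw [Blk_length]; exact hvx
    have hget : (Blk hc (c x).1 t).get ⟨(c x).2, hlt⟩ = x := by
      simp only [Blk]
      rw [List.get_ofFn]
      show ((Fib c (c x).1 (c x).2).orderIsoOfFin (hc.2 (c x).1 (c x).2 hvx) t : Fin n) = x
      simp [ht]
    have hio := List.get_idxOf (Blk_nodup hc (c x).1 t) ⟨(c x).2, hlt⟩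
    rw [hget] at hio
    exact hio
  rw [hj, hr]

lemma prof_build (hc : Valid i c) : prof (build hc) = i := by
  apply valid_unique (cfun_valid (build hc))
  rw [cfun_build hc]
  exact hc

end Construct

-- ### finiteness

instance : Finite (Lbl (n := n) i) := by
  have hbound : ∀ (c : Lbl i) (x : Fin n), (c.1 x).1 ≤ n ∧ (c.1 x).2 ≤ n := by
    intro c x
    have h1 : (c.1 x).1 ∈ i.parts := valid_mem_parts c.2 x
    have h2 : (c.1 x).1 ≤ i.parts.sum :=
      Multiset.single_le_sum (fun y _ => Nat.zero_le y) _ h1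
    rw [i.parts_sum] at h2
    exact ⟨h2, le_trans (le_of_lt (c.2.1 x)) h2⟩
  apply Finite.of_injective
    (fun c : Lbl i => fun x : Fin n =>
      ((⟨(c.1 x).1, Nat.lt_succ_of_le (hbound c x).1⟩ : Fin (n+1)),
       (⟨(c.1 x).2, Nat.lt_succ_of_le (hbound c x).2⟩ : Fin (n+1))))
  intro c c' h
  apply Subtype.ext
  funext x
  have := congrFun h x
  rw [Prod.ext_iff] at this
  obtain ⟨h1, h2⟩ := this
  exact Prod.ext (congrArg Fin.val h1) (congrArg Fin.val h2)

-- ### counting labelings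

def K (i : n.Partition) : Finset (ℕ × ℕ) :=
  i.parts.toFinset.biUnion (fun j => (Finset.range j).image (fun r => (j, r)))

lemma mem_K {i : n.Partition} {p : ℕ × ℕ} : p ∈ K i ↔ p.1 ∈ i.parts ∧ p.2 < p.1 := by
  unfold K
  rw [Finset.mem_biUnion]
  constructor
  · rintro ⟨j, hj, hp⟩
    rw [Finset.mem_image] at hp
    obtain ⟨r, hr, rfl⟩ := hp
    exact ⟨Multiset.mem_toFinset.1 hj, Finset.mem_range.1 hr⟩
  · rintro ⟨h1, h2⟩
    exact ⟨p.1, Multiset.mem_toFinset.2 h1,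
      Finset.mem_image.2 ⟨p.2, Finset.mem_range.2 h2, rfl⟩⟩

lemma K_pairwiseDisjoint (i : n.Partition) :
    (↑i.parts.toFinset : Set ℕ).PairwiseDisjoint
      (fun j => (Finset.range j).image (fun r => (j, r))) := by
  intro j _ j' _ hne
  simp only [Function.onFun, Finset.disjoint_left]
  intro p hp hp'
  rw [Finset.mem_image] at hp hp'
  obtain ⟨r, -, rfl⟩ := hp
  obtain ⟨r', -, h⟩ := hp'
  exact hne (congrArg Prod.fst h).symm

lemma sum_K (i : n.Partition) : ∑ p ∈ K i, i.mult p.1 = n := by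
  unfold K
  rw [Finset.sum_biUnion (K_pairwiseDisjoint i)]
  have h1 : ∀ j ∈ i.parts.toFinset,
      (∑ p ∈ (Finset.range j).image (fun r => (j, r)), i.mult p.1)
        = Multiset.count j i.parts * j := by
    intro j _
    rw [Finset.sum_image (fun a _ b _ h => (congrArg Prod.snd h))]
    simp [Nat.Partition.mult, mul_comm]
  rw [Finset.sum_congr rfl h1]
  have := Finset.sum_multiset_count i.parts
  conv_rhs => rw [← i.parts_sum]
  rw [this]
  simp [smul_eq_mul]

lemma prod_K (i : n.Partition) : ∏ p ∈ K i, (i.mult p.1).factorial =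
    ∏ j ∈ Finset.Icc 1 i.dmax, ((i.mult j).factorial) ^ j := by
  unfold K
  rw [Finset.prod_biUnion (K_pairwiseDisjoint i)]
  have h1 : ∀ j ∈ i.parts.toFinset,
      (∏ p ∈ (Finset.range j).image (fun r => (j, r)), (i.mult p.1).factorial)
        = ((i.mult j).factorial) ^ j := by
    intro j _
    rw [Finset.prod_image (fun a _ b _ h => (congrArg Prod.snd h))]
    simp
  rw [Finset.prod_congr rfl h1]
  apply Finset.prod_subset
  · intro j hj
    rw [Multiset.mem_toFinset] at hj
    rw [Finset.mem_Icc]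
    exact ⟨i.parts_pos hj, Finset.le_sup (f := id) (Multiset.mem_toFinset.2 hj)⟩
  · intro j _ hj
    rw [Multiset.mem_toFinset] at hj
    have : i.mult j = 0 := Multiset.count_eq_zero_of_notMem hj
    rw [this]
    simp

/-- target type for counting. -/
def Tt (i : n.Partition) : Type := Σ p : (K i), Fin (i.mult p.1.1)

noncomputable instance (i : n.Partition) : Fintype (Tt i) := by
  unfold Tt; infer_instance

lemma card_Tt (i : n.Partition) : Fintype.card (Tt i) = n := by
  show Fintype.card (Σ p : (K i), Fin (i.mult p.1.1)) = n
  rw [Fintype.card_sigma]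
  simp only [Fintype.card_fin]
  rw [Finset.sum_coe_sort (K i) (fun p => i.mult p.1)]
  exact sum_K i

def sigmaFst {ι : Type*} (F : ι → Type*) (p : ι) : {y : Σ a, F a // y.1 = p} ≃ F p where
  toFun y := y.2 ▸ y.1.2
  invFun t := ⟨⟨p, t⟩, rfl⟩
  left_inv := by rintro ⟨⟨a, t⟩, rfl⟩; rfl
  right_inv := by intro t; rfl

lemma mem_K_of_valid {i : n.Partition} {c : Fin n → ℕ × ℕ} (hc : Valid i c) (x : Fin n) :
    c x ∈ K i := mem_K.2 ⟨valid_mem_parts hc x, hc.1 x⟩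

/-- labeling extracted from a bijection. -/
noncomputable def piMap (i : n.Partition) (e : Fin n ≃ Tt i) : Lbl i := by
  classical
  refine ⟨fun x => ((e x).1 : ℕ × ℕ), ?_, ?_⟩
  · intro x
    exact (mem_K.1 (e x).1.2).2
  · intro j r hr
    by_cases hK : ((j, r) : ℕ × ℕ) ∈ K i
    · set p₀ : (K i) := ⟨(j, r), hK⟩
      have hfc : (Finset.univ.filter (fun x => ((e x).1 : ℕ × ℕ) = (j, r))).card
          = Fintype.card {x : Fin n // (e x).1 = p₀} := by
        rw [Fintype.card_subtype]
        congr 1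
        apply Finset.filter_congr
        intro x _
        constructor
        · intro h; exact Subtype.ext h
        · intro h; exact congrArg Subtype.val h
      rw [hfc]
      have he : {x : Fin n // (e x).1 = p₀} ≃ Fin (i.mult j) :=
        (e.subtypeEquiv (fun x => Iff.rfl)).trans
          ((sigmaFst (fun p : (K i) => Fin (i.mult p.1.1)) p₀))
      rw [Fintype.card_congr he, Fintype.card_fin]
    · have h0 : i.mult j = 0 := by
        by_contra h0
        exact hK (mem_K.2 ⟨Multiset.count_pos.1 (Nat.pos_of_ne_zero h0), hr⟩)
      rw [h0, Finset.card_eq_zero, Finset.filter_eq_empty_iff]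
      intro x _
      intro hx
      exact hK (hx ▸ (e x).1.2)

def Efam {i : n.Partition} (c : Lbl i) : Type :=
  Π p : (K i), ({x : Fin n // c.1 x = ↑p} ≃ Fin (i.mult p.1.1))

noncomputable def keyF {i : n.Partition} (c : Lbl i) : Fin n → (K i) :=
  fun x => ⟨c.1 x, mem_K_of_valid c.2 x⟩

lemma card_fiber_c {i : n.Partition} (c : Lbl i) (p : (K i)) :
    Fintype.card {x : Fin n // c.1 x = ↑p} = i.mult p.1.1 := by
  rw [Fintype.card_subtype]
  have : (p : ℕ × ℕ) = (p.1.1, p.1.2) := rfl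
  have h2 := c.2.2 p.1.1 p.1.2 (mem_K.1 p.2).2
  rw [← this] at h2
  exact h2

noncomputable instance {i : n.Partition} (c : Lbl i) : Finite (Efam c) := by
  unfold Efam; infer_instance

lemma card_Efam {i : n.Partition} (c : Lbl i) :
    Nat.card (Efam c) = ∏ p ∈ K i, (i.mult p.1).factorial := by
  classical
  show Nat.card (Π p : (K i), _) = _
  rw [Nat.card_pi]
  rw [← Finset.prod_coe_sort (K i) (fun p => (i.mult p.1).factorial)]
  apply Finset.prod_congr rfl
  intro p _
  rw [Nat.card_eq_fintype_card, Fintype.card_equiv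
    (Fintype.equivFinOfCardEq (card_fiber_c c p)), card_fiber_c c p]

noncomputable def inj1 {i : n.Partition} (c : Lbl i)
    (e : {e : Fin n ≃ Tt i // piMap i e = c}) : Efam c := fun p =>
  (Equiv.subtypeEquiv e.1 (fun x => by
      constructor
      · intro h
        apply Subtype.ext
        show ((e.1 x).1 : ℕ × ℕ) = ↑p
        rw [← h]
        exact (congrFun (congrArg Subtype.val e.2) x)
      · intro h
        rw [← (congrFun (congrArg Subtype.val e.2) x : ((e.1 x).1 : ℕ × ℕ) = c.1 x)]
        exact congrArg Subtype.val h)).trans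
    (sigmaFst (fun p : (K i) => Fin (i.mult p.1.1)) p)

lemma inj1_injective {i : n.Partition} (c : Lbl i) : Function.Injective (inj1 c) := by
  intro e e' h
  apply Subtype.ext
  apply Equiv.ext
  intro x
  have hx : c.1 x = ↑(keyF c x) := rfl
  have h1 := congrArg (fun F : Efam c => (F (keyF c x)) ⟨x, hx⟩) h
  simp only [inj1, Equiv.trans_apply] at h1
  have h2 := (sigmaFst (fun p : (K i) => Fin (i.mult p.1.1)) (keyF c x)).injective h1
  have h3 := congrArg Subtype.val h2
  exact h3

noncomputable def bigE {i : n.Partition} (c : Lbl i) (g : Efam c) : Fin n ≃ Tt i :=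
  (Equiv.sigmaFiberEquiv (keyF c)).symm.trans
    (Equiv.sigmaCongrRight (fun p =>
      ((Equiv.subtypeEquivRight (fun x => by
        constructor
        · intro h; exact congrArg Subtype.val h
        · intro h; exact Subtype.ext h)).trans (g p))))

lemma piMap_bigE {i : n.Partition} (c : Lbl i) (g : Efam c) : piMap i (bigE c g) = c := by
  apply Subtype.ext
  funext x
  rfl

lemma bigE_injective {i : n.Partition} (c : Lbl i) : Function.Injective (bigE c) := by
  intro g g' h
  funext p
  apply Equiv.ext
  rintro ⟨x, hx⟩
  obtain ⟨pv, pmem⟩ := p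
  have hx' : c.1 x = pv := hx
  subst hx'
  have h1 : (bigE c g) x = (bigE c g') x := congrArg (fun E : Fin n ≃ Tt i => E x) h
  have h2 : (bigE c g) x = ⟨keyF c x, g (keyF c x) ⟨x, rfl⟩⟩ := rfl
  have h3 : (bigE c g') x = ⟨keyF c x, g' (keyF c x) ⟨x, rfl⟩⟩ := rfl
  rw [h2, h3] at h1
  have h4 := eq_of_heq (Sigma.mk.inj_iff.1 h1).2
  exact h4

noncomputable def inj2 {i : n.Partition} (c : Lbl i)
    (g : Efam c) : {e : Fin n ≃ Tt i // piMap i e = c} := ⟨bigE c g, piMap_bigE c g⟩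

lemma inj2_injective {i : n.Partition} (c : Lbl i) : Function.Injective (inj2 c) := by
  intro g g' h
  exact bigE_injective c (congrArg Subtype.val h)

lemma card_fiber_piMap {i : n.Partition} (c : Lbl i) :
    Nat.card {e : Fin n ≃ Tt i // piMap i e = c} = ∏ p ∈ K i, (i.mult p.1).factorial := by
  rw [← card_Efam c]
  exact le_antisymm (Nat.card_le_card_of_injective _ (inj1_injective c))
    (Nat.card_le_card_of_injective _ (inj2_injective c))

lemma card_Lbl_mul (i : n.Partition) :
    Nat.card (Lbl i) * ∏ p ∈ K i, (i.mult p.1).factorial = Nat.factorial n := by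
  classical
  have h1 : Nat.card (Fin n ≃ Tt i) = Nat.factorial n := by
    rw [Nat.card_eq_fintype_card,
      Fintype.card_equiv ((Fintype.equivFinOfCardEq (card_Tt i)).symm)]
    simp
  letI : Fintype (Lbl i) := Fintype.ofFinite _
  letI : ∀ c : Lbl i, Fintype {e : Fin n ≃ Tt i // piMap i e = c} := fun c => Fintype.ofFinite _
  have h2 : Nat.card (Fin n ≃ Tt i)
      = ∑ c : Lbl i, Nat.card {e : Fin n ≃ Tt i // piMap i e = c} := by
    rw [Nat.card_congr (Equiv.sigmaFiberEquiv (piMap i)).symm]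
    rw [Nat.card_eq_fintype_card, Fintype.card_sigma]
    apply Finset.sum_congr rfl
    intro c _
    rw [Nat.card_eq_fintype_card]
  rw [h2] at h1
  rw [← h1]
  rw [Finset.sum_congr rfl (fun c _ => card_fiber_piMap c)]
  rw [Finset.sum_const, Finset.card_univ, smul_eq_mul, Nat.card_eq_fintype_card]

-- ### orbit counting

lemma exists_part_elem {i : n.Partition} (c : Lbl i) {j : ℕ} (hj : j ∈ i.parts) :
    ∃ x : Fin n, (c.1 x).1 = j := by
  have hj0 : 0 < j := i.parts_pos hj
  have hcard := c.2.2 j 0 hj0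
  have hpos : 0 < i.mult j := Multiset.count_pos.2 hj
  rw [← hcard] at hpos
  obtain ⟨x, hx⟩ := Finset.card_pos.1 hpos
  rw [Finset.mem_filter] at hx
  exact ⟨x, by rw [hx.2]⟩

lemma shift_inj_aux {i : n.Partition} (c : Lbl i) {k k' : ℕ} (hle : k ≤ k')
    (h : shiftc k c.1 = shiftc k' c.1) : i.lcmParts ∣ k' - k := by
  apply Finset.lcm_dvd
  intro j hj
  rw [Multiset.mem_toFinset] at hj
  obtain ⟨x, hx⟩ := exists_part_elem c hj
  have hx2 := congrFun h x
  unfold shiftc at hx2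
  rw [Prod.ext_iff] at hx2
  have h2 := hx2.2
  rw [hx] at h2
  -- h2 : ((c.1 x).2 + k) % j = ((c.1 x).2 + k') % j
  have hm : (c.1 x).2 + k ≡ (c.1 x).2 + k' [MOD j] := h2
  have hm2 : k ≡ k' [MOD j] := Nat.ModEq.add_left_cancel' _ hm
  exact (Nat.modEq_iff_dvd' hle).1 hm2

lemma shift_inj_lt {i : n.Partition} (c : Lbl i) {k k' : ℕ}
    (hk : k < i.lcmParts) (hk' : k' < i.lcmParts)
    (h : shiftc k c.1 = shiftc k' c.1) : k = k' := by
  rcases le_total k k' with hle | hle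
  · have hd := shift_inj_aux c hle h
    rcases Nat.eq_zero_or_pos (k' - k) with h0 | h0
    · omega
    · have := Nat.le_of_dvd h0 hd; omega
  · have hd := shift_inj_aux c hle h.symm
    rcases Nat.eq_zero_or_pos (k - k') with h0 | h0
    · omega
    · have := Nat.le_of_dvd h0 hd; omega

lemma shiftc_mod_lcm {i : n.Partition} (c : Lbl i) (m : ℕ) :
    shiftc m c.1 = shiftc (m % i.lcmParts) c.1 := by
  conv_lhs => rw [← Nat.div_add_mod m i.lcmParts]
  rw [← shiftc_shiftc, shiftc_id c.2 (dvd_mul_right _ _)]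

lemma card_class {i : n.Partition} (q : Quotient (rotSetoid i)) :
    Nat.card {c' : Lbl i // Quotient.mk (rotSetoid i) c' = q} = i.lcmParts := by
  classical
  obtain ⟨c, rfl⟩ := Quotient.exists_rep q
  have hL0 : 0 < i.lcmParts := lcmParts_pos i
  have hfin : Nat.card (Fin i.lcmParts) = i.lcmParts :=
    Nat.card_eq_fintype_card.trans (Fintype.card_fin _)
  apply le_antisymm
  · rw [← hfin]
    apply Nat.card_le_card_of_injective
      (fun c' : {c' : Lbl i // Quotient.mk (rotSetoid i) c' = Quotient.mk _ c} =>
        (⟨Nat.find ((rotSetoid i).iseqv.symm (Quotient.exact c'.2)) % i.lcmParts,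
          Nat.mod_lt _ hL0⟩ : Fin i.lcmParts))
    intro c1 c2 h
    have h1 := Nat.find_spec ((rotSetoid i).iseqv.symm (Quotient.exact c1.2))
    have h2 := Nat.find_spec ((rotSetoid i).iseqv.symm (Quotient.exact c2.2))
    have hv := congrArg Fin.val h
    simp only at hv
    apply Subtype.ext
    apply Subtype.ext
    rw [h1, h2, shiftc_mod_lcm, hv, ← shiftc_mod_lcm]
  · rw [← hfin]
    apply Nat.card_le_card_of_injective
      (fun k : Fin i.lcmParts =>
        (⟨⟨shiftc k.1 c.1, valid_shiftc c.2 k.1⟩,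
          Quotient.sound ((rotSetoid i).iseqv.symm ⟨k.1, rfl⟩)⟩ :
          {c' : Lbl i // Quotient.mk (rotSetoid i) c' = Quotient.mk _ c}))
    intro k k' h
    apply Fin.ext
    have := congrArg (fun z => z.1.1) h
    exact shift_inj_lt c k.2 k'.2 this

lemma card_Lbl_eq_orbits (i : n.Partition) :
    Nat.card (Lbl i) = Nat.card (Quotient (rotSetoid i)) * i.lcmParts := by
  classical
  letI : Fintype (Lbl i) := Fintype.ofFinite _
  letI : Fintype (Quotient (rotSetoid i)) := Fintype.ofFinite _
  letI : ∀ q : Quotient (rotSetoid i),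
      Fintype {c' : Lbl i // Quotient.mk (rotSetoid i) c' = q} := fun q => Fintype.ofFinite _
  rw [Nat.card_congr (Equiv.sigmaFiberEquiv (Quotient.mk (rotSetoid i))).symm]
  rw [Nat.card_eq_fintype_card, Fintype.card_sigma]
  have : ∀ q : Quotient (rotSetoid i),
      Fintype.card {c' : Lbl i // Quotient.mk (rotSetoid i) c' = q} = i.lcmParts := by
    intro q
    rw [← Nat.card_eq_fintype_card]
    exact card_class q
  rw [Finset.sum_congr rfl (fun q _ => this q)]
  rw [Finset.sum_const, Finset.card_univ, smul_eq_mul, Nat.card_eq_fintype_card]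

-- ### master bijection

lemma shiftc_zero {i : n.Partition} {c : Fin n → ℕ × ℕ} (hc : Valid i c) :
    shiftc 0 c = c := by
  funext x
  unfold shiftc
  simp [Nat.mod_eq_of_lt (hc.1 x)]

def Fmap (μ : PartitionedOrder n) : Σ i : n.Partition, Quotient (rotSetoid i) :=
  ⟨prof μ, Quotient.mk _ ⟨cfun μ, cfun_valid μ⟩⟩

lemma quot_heq {i i' : n.Partition} (h : i = i') (c : Lbl i) (c' : Lbl i')
    (hcc : ∃ m, c.1 = shiftc m c'.1) :
    HEq (Quotient.mk (rotSetoid i) c) (Quotient.mk (rotSetoid i') c') := by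
  subst h
  exact heq_of_eq (Quotient.sound ((rotSetoid i).iseqv.symm hcc))

lemma rel_of_heq {i i' : n.Partition} (h : i = i') (c : Lbl i) (c' : Lbl i')
    (hq : HEq (Quotient.mk (rotSetoid i) c) (Quotient.mk (rotSetoid i') c')) :
    ∃ m, c'.1 = shiftc m c.1 := by
  subst h
  exact Quotient.exact (eq_of_heq hq)

lemma Fmap_respects {μ μ' : PartitionedOrder n} (h : ∃ k, μ.phi = μ'.phi.rotate k) :
    Fmap μ = Fmap μ' := by
  obtain ⟨k, hk⟩ := h
  obtain ⟨hi, hc⟩ := rel_forward hk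
  exact Sigma.ext hi (quot_heq hi _ _ ⟨μ.period - k % μ.period, hc⟩)

noncomputable def quotEquiv (n : ℕ) :
    Quot (fun μ μ' : PartitionedOrder n => ∃ k, μ.phi = μ'.phi.rotate k) ≃
      Σ i : n.Partition, Quotient (rotSetoid i) := by
  apply Equiv.ofBijective (Quot.lift Fmap (fun μ μ' h => Fmap_respects h))
  constructor
  · intro a b
    induction a using Quot.ind with | _ μ =>
    induction b using Quot.ind with | _ μ' =>
    intro h
    have h' : Fmap μ = Fmap μ' := h
    have hi : prof μ = prof μ' := congrArg Sigma.fst h'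
    have hq := (Sigma.mk.inj_iff.1 h').2
    obtain ⟨m, hm⟩ := rel_of_heq hi _ _ hq
    exact (Quot.sound (rel_backward hi.symm hm)).symm
  · rintro ⟨i, q⟩
    obtain ⟨c, rfl⟩ := Quotient.exists_rep q
    refine ⟨Quot.mk _ (build c.2), ?_⟩
    show Fmap (build c.2) = ⟨i, Quotient.mk _ c⟩
    have hi : prof (build c.2) = i := prof_build c.2
    refine Sigma.ext hi (quot_heq hi _ _ ⟨0, ?_⟩)
    show cfun (build c.2) = shiftc 0 c.1
    rw [cfun_build, shiftc_zero c.2]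

lemma card_quot (n : ℕ) :
    Nat.card (Quot (fun μ μ' : PartitionedOrder n => ∃ k, μ.phi = μ'.phi.rotate k)) =
      ∑ i : n.Partition, Nat.card (Quotient (rotSetoid i)) := by
  classical
  rw [Nat.card_congr (quotEquiv n)]
  letI : ∀ i : n.Partition, Fintype (Quotient (rotSetoid i)) := fun i => Fintype.ofFinite _
  rw [Nat.card_eq_fintype_card, Fintype.card_sigma]
  exact Finset.sum_congr rfl (fun i _ => Nat.card_eq_fintype_card.symm)

lemma nat_key (i : n.Partition) :
    n.factorial = Nat.card (Quotient (rotSetoid i)) * i.lcmParts *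
      ∏ j ∈ Finset.Icc 1 i.dmax, ((i.mult j).factorial) ^ j := by
  rw [← prod_K i, ← card_Lbl_eq_orbits i, card_Lbl_mul i]

end BPAux

open Finset BPAux in
/-- the number of block-parallel update modes of `[n]` up to
dynamical isomorphism on the limit set (`μ ≡⋆ μ'` iff `φ(μ)` is a circular
shift of `φ(μ')`) equals `∑_i [n!/∏_j (m(i,j)!)^j] · (1/lcm(i))`. -/
theorem card_BPn_star (n : ℕ) (hn : 1 ≤ n) :
    (Nat.card (Quot (fun μ μ' : PartitionedOrder n =>
        ∃ k, μ.phi = μ'.phi.rotate k)) : ℚ) =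
    ∑ i : n.Partition,
      ((n.factorial : ℚ) /
          ∏ j ∈ Icc 1 i.dmax, ((i.mult j).factorial : ℚ) ^ j) *
        (1 / (i.lcmParts : ℚ)) := by
  rw [card_quot n]
  push_cast
  apply Finset.sum_congr rfl
  intro i _
  have hP : (0:ℚ) < ∏ j ∈ Icc 1 i.dmax, ((i.mult j).factorial : ℚ) ^ j := by
    apply Finset.prod_pos
    intro j _
    exact pow_pos (by exact_mod_cast (i.mult j).factorial_pos) j
  have hL : (0:ℚ) < (i.lcmParts : ℚ) := by exact_mod_cast lcmParts_pos i
  have key : (n.factorial : ℚ) = (Nat.card (Quotient (rotSetoid i)) : ℚ) * (i.lcmParts : ℚ) *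
      ∏ j ∈ Icc 1 i.dmax, ((i.mult j).factorial : ℚ) ^ j := by
    exact_mod_cast congrArg (Nat.cast (R := ℚ)) (nat_key i)
  rw [key]
  field_simp
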